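/- If Y is a subspace of a topological space X and the subspace Y has a Noetherian base (a base for its topology containing no infinite strictly ⊆-increasing sequence), then Y admits a Noetherian outer base in X, i.e., a family B of open subsets of X, containing no infinite strictly ⊆-increasing sequence, such that for every p ∈ Y the sets in B containing p form a neighborhood base of p in X. -/

import Mathlib

universe u

/-- A family of sets is Noetherian iff it contains no infinite strictly
`⊆`-increasing sequence. -/
def NoetherianFamily {α : Type u} (B : Set (Set α)) : Prop :=
  ¬ ∃ f : ℕ → Set α, (∀ n, f n ∈ B) ∧ StrictMono f

/-- Every family of sets has a coinitial Noetherian subfamily. -/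
theorem exists_coinitial_noetherian {α : Type u} (S : Set (Set α)) :
    ∃ T : Set (Set α), T ⊆ S ∧ (∀ x ∈ S, ∃ y ∈ T, y ⊆ x) ∧ NoetherianFamily T := by
  classical
  let r : ↥S → ↥S → Prop := WellOrderingRel
  have hwo : IsWellOrder ↥S r := WellOrderingRel.isWellOrder
  have wf : WellFounded r := hwo.toIsWellFounded.wf
  refine ⟨Subtype.val '' {y : ↥S | ∀ z : ↥S, (z : Set α) ⊆ (y : Set α) → ¬ r z y},
    ?_, ?_, ?_⟩
  · rintro x ⟨y, _, rfl⟩; exact y.2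
  · intro x hx
    have hne : {z : ↥S | (z : Set α) ⊆ x}.Nonempty := ⟨⟨x, hx⟩, Set.mem_setOf.2 (subset_rfl : x ⊆ x)⟩
    set y := wf.min _ hne with hy
    have hymem : (y : Set α) ⊆ x := wf.min_mem _ hne
    refine ⟨y, ⟨y, ?_, rfl⟩, hymem⟩
    intro z hz
    exact wf.not_lt_min _ (show (z : Set α) ⊆ x from hz.trans hymem)
  · rintro ⟨f, hfT, hfSM⟩
    have hfS : ∀ n, f n ∈ S := fun n => (fun h => _root_.id h) <| by
      obtain ⟨y, _, hy⟩ := hfT n; rw [← hy]; exact y.2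
    let g : ℕ → ↥S := fun n => ⟨f n, hfS n⟩
    have hprop : ∀ n, ∀ w : ↥S, (w : Set α) ⊆ f n → ¬ r w (g n) := by
      intro n
      obtain ⟨y, hy, hyval⟩ := hfT n
      have hyg : y = g n := Subtype.ext hyval
      intro w hw
      rw [← hyg]
      exact hy w (by rw [hyval]; exact hw)
    have desc : ∀ n, r (g (n + 1)) (g n) := by
      intro n
      have hlt : f n < f (n + 1) := hfSM (Nat.lt_succ_self n)
      have hsub : f n ⊆ f (n + 1) := le_of_lt hlt
      have hne' : g n ≠ g (n + 1) := by
        intro h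
        exact absurd (congrArg Subtype.val h) (ne_of_lt hlt)
      have hnr : ¬ r (g n) (g (n + 1)) := hprop (n + 1) (g n) hsub
      rcases trichotomous_of r (g n) (g (n + 1)) with h | h | h
      · exact absurd h hnr
      · exact absurd h hne'
      · exact h
    have hne : (Set.range g).Nonempty := ⟨g 0, Set.mem_range_self 0⟩
    obtain ⟨n, hn⟩ := wf.min_mem (Set.range g) hne
    exact wf.not_lt_min (Set.range g) (Set.mem_range_self (n + 1))
      (hn ▸ desc n)

/-- If a subspace `Y` of `X` has a Noetherian base, then `Y` admits a Noetherian
outer base in `X`. -/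
theorem stmt2 {X : Type u} [TopologicalSpace X] (Y : Set X)
    (hY : ∃ B : Set (Set Y), TopologicalSpace.IsTopologicalBasis B ∧ NoetherianFamily B) :
    ∃ B : Set (Set X), (∀ G ∈ B, IsOpen G) ∧
      (∀ p ∈ Y, ∀ U : Set X, IsOpen U → p ∈ U → ∃ G ∈ B, p ∈ G ∧ G ⊆ U) ∧
      NoetherianFamily B := by
  classical
  obtain ⟨B, hBbasis, hBnoe⟩ := hY
  -- the family of open sets of `X` with trace exactly `↑b` on `Y`
  let S : Set Y → Set (Set X) := fun b => {G | IsOpen G ∧ G ∩ Y = Subtype.val '' b}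
  -- a coinitial Noetherian subfamily of `S b`
  let F : Set Y → Set (Set X) := fun b => (exists_coinitial_noetherian (S b)).choose
  have hF : ∀ b, F b ⊆ S b ∧ (∀ x ∈ S b, ∃ y ∈ F b, y ⊆ x) ∧ NoetherianFamily (F b) :=
    fun b => (exists_coinitial_noetherian (S b)).choose_spec
  -- the maximal open set with trace inside `↑b`
  let V : Set Y → Set X := fun b => ⋃₀ {W | IsOpen W ∧ W ∩ Y ⊆ Subtype.val '' b}
  have hVopen : ∀ b, IsOpen (V b) := fun b => isOpen_sUnion (fun W hW => hW.1)
  have hVtrace : ∀ b ∈ B, V b ∩ Y = Subtype.val '' b := by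
    intro b hb
    apply Set.Subset.antisymm
    · rintro x ⟨hx, hxY⟩
      obtain ⟨W, hW, hxW⟩ := hx
      exact hW.2 ⟨hxW, hxY⟩
    · have hbo : IsOpen b := hBbasis.isOpen hb
      obtain ⟨W, hWopen, hWb⟩ := isOpen_induced_iff.1 hbo
      have himg : Subtype.val '' b = W ∩ Y := by
        rw [← hWb, Subtype.image_preimage_coe, Set.inter_comm]
      intro x hx
      rw [himg] at hx
      exact ⟨⟨W, ⟨hWopen, by rw [himg]⟩, hx.1⟩, hx.2⟩
  refine ⟨{G | ∃ b ∈ B, G ∈ F b}, ?_, ?_, ?_⟩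
  · rintro G ⟨b, _, hGF⟩
    exact ((hF b).1 hGF).1
  · -- outer neighbourhood base property
    intro p hp U hU hpU
    have hpre : IsOpen (Subtype.val ⁻¹' U : Set Y) := hU.preimage continuous_subtype_val
    obtain ⟨b, hbB, hpb, hbU⟩ :=
      hBbasis.exists_subset_of_mem_open (show (⟨p, hp⟩ : Y) ∈ Subtype.val ⁻¹' U from hpU) hpre
    have hbU' : Subtype.val '' b ⊆ U := Set.image_subset_iff.2 hbU
    have hmem : V b ∩ U ∈ S b := by
      refine ⟨(hVopen b).inter hU, ?_⟩
      rw [Set.inter_right_comm, hVtrace b hbB]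
      exact Set.inter_eq_left.2 hbU'
    obtain ⟨G, hGF, hGsub⟩ := (hF b).2.1 _ hmem
    have hGtrace : G ∩ Y = Subtype.val '' b := ((hF b).1 hGF).2
    have hpG : p ∈ G := by
      have : p ∈ Subtype.val '' b := ⟨⟨p, hp⟩, hpb, rfl⟩
      rw [← hGtrace] at this
      exact this.1
    exact ⟨G, ⟨b, hbB, hGF⟩, hpG, hGsub.trans Set.inter_subset_right⟩
  · -- Noetherian
    rintro ⟨f, hfB, hfSM⟩
    choose bf hbfB hbfF using hfB
    have htrace : ∀ n, f n ∩ Y = Subtype.val '' bf n := fun n => ((hF (bf n)).1 (hbfF n)).2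
    have hmono : ∀ m n, m ≤ n → bf m ⊆ bf n := by
      intro m n hmn
      have : f m ⊆ f n := hfSM.monotone hmn
      have himg : Subtype.val '' bf m ⊆ Subtype.val '' bf n := by
        rw [← htrace, ← htrace]
        exact fun x hx => ⟨this hx.1, hx.2⟩
      exact (Set.image_subset_image_iff Subtype.val_injective).1 himg
    by_cases hA : ∀ N, ∃ n, N < n ∧ bf N ≠ bf n
    · -- extract a strictly increasing sequence in `B`
      let g : ℕ → ℕ := fun k => Nat.rec 0 (fun _ gk => (hA gk).choose) k
      have hstep : ∀ k, bf (g k) < bf (g (k + 1)) := by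
        intro k
        obtain ⟨hlt, hne⟩ := (hA (g k)).choose_spec
        exact lt_of_le_of_ne (hmono _ _ hlt.le) hne
      exact hBnoe ⟨fun k => bf (g k), fun k => hbfB (g k),
        strictMono_nat_of_lt_succ hstep⟩
    · -- eventually constant trace: contradiction with `F b` Noetherian
      push_neg at hA
      obtain ⟨N, hN⟩ := hA
      have hconst : ∀ k, bf (N + k) = bf N := by
        intro k
        cases k with
        | zero => rfl
        | succ k => exact (hN (N + (k + 1)) (by omega)).symm
      refine (hF (bf N)).2.2 ⟨fun k => f (N + k), ?_, ?_⟩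
      · intro k
        have := hbfF (N + k)
        rwa [hconst k] at this
      · intro a b hab
        exact hfSM (by omega)
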